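/- Proposition 7(3): Fix π₀ ∈ (0,1) and q ∈ (0, 1/2). For n ∈ ℕ and p ∈ (q, 1−q), let α(p) = (1 − √(1−4pq))/2 and V_n(p) = 1 / (1 + ((1−π₀)/π₀)·((p−α(p))/(q−α(p)))·(q/p)^{n+1}). Then for each n ∈ ℕ there exists p̂(n) ∈ [q, 1−q) such that p ↦ V_n(p) is increasing on (q, p̂(n)) and decreasing on (p̂(n), 1−q); moreover the thresholds p̂(n) can be chosen non-decreasing in n. -/

import Mathlib

/-- The sender's equilibrium value `V_n` as a function of `p`, for fixed
`q` and prior `π0`. -/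
noncomputable def Vp (π0 q : ℝ) (n : ℕ) (p : ℝ) : ℝ :=
  let α := (1 - Real.sqrt (1 - 4 * p * q)) / 2
  1 / (1 + ((1 - π0) / π0) * ((p - α) / (q - α)) * (q / p) ^ (n + 1))

set_option maxHeartbeats 1000000

noncomputable def alphaE (q p : ℝ) : ℝ := (1 - Real.sqrt (1 - 4 * p * q)) / 2

noncomputable def FFe (q : ℝ) (n : ℕ) (a : ℝ) : ℝ :=
  a * (1 - a - q) / (q * (q - a)) * (q ^ 2 / (a * (1 - a))) ^ (n + 1)

noncomputable def PhiE (q a : ℝ) : ℝ :=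
  a * ((1 - a) ^ 2 + 2 * a * q - q - q ^ 2) / ((1 - 2 * a) * (q - a) * (1 - a - q))

def PPe (q a : ℝ) : ℝ :=
  q - 2*q^2 + q^4 - 4*a*q + 8*a*q^2 - 4*a*q^3 - a^2 + 8*a^2*q - 8*a^2*q^2
    + 4*a^2*q^3 + 2*a^3 - 8*a^3*q - a^4 + 4*a^4*q

lemma alpha_mul {q p : ℝ} (hq0 : 0 < q) (hq : q < 1/2) (hp1 : q ≤ p) (hp2 : p ≤ 1 - q) :
    alphaE q p * (1 - alphaE q p) = p * q ∧ 0 < alphaE q p ∧ alphaE q p < 1/2 := by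
  have harg : 0 < 1 - 4 * p * q := by nlinarith [mul_pos (show (0:ℝ) < 1 - 2*q by linarith) (show (0:ℝ) < 1 - 2*q by linarith)]
  have hs : Real.sqrt (1 - 4 * p * q) ^ 2 = 1 - 4 * p * q := Real.sq_sqrt harg.le
  have hs1 : Real.sqrt (1 - 4 * p * q) < 1 := by
    have h := Real.sqrt_lt_sqrt harg.le (show 1 - 4 * p * q < 1 by nlinarith)
    simpa using h
  have hs0 : 0 < Real.sqrt (1 - 4 * p * q) := Real.sqrt_pos.mpr harg
  refine ⟨?_, ?_, ?_⟩
  · unfold alphaE; linear_combination (-(1:ℝ)/4) * hs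
  · unfold alphaE; linarith
  · unfold alphaE; linarith

lemma alpha_inv {q a : ℝ} (hq0 : 0 < q) (ha0 : 0 ≤ a) (ha : a ≤ 1/2) :
    alphaE q (a * (1 - a) / q) = a := by
  unfold alphaE
  have h : 1 - 4 * (a * (1 - a) / q) * q = (1 - 2*a)^2 := by field_simp; ring
  rw [h, Real.sqrt_sq (by linarith)]; ring

lemma alpha_strictMono {q p₁ p₂ : ℝ} (hq0 : 0 < q) (hq : q < 1/2) (h1 : q ≤ p₁)
    (h12 : p₁ < p₂) (h2 : p₂ ≤ 1 - q) : alphaE q p₁ < alphaE q p₂ := by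
  have harg : 0 < 1 - 4 * p₂ * q := by nlinarith [mul_pos (show (0:ℝ) < 1 - 2*q by linarith) (show (0:ℝ) < 1 - 2*q by linarith)]
  have := Real.sqrt_lt_sqrt harg.le (show 1 - 4 * p₂ * q < 1 - 4 * p₁ * q by nlinarith)
  unfold alphaE; linarith

lemma alpha_lt {q p : ℝ} (hq0 : 0 < q) (hq : q < 1/2) (hp1 : q ≤ p) (hp2 : p < 1 - q) :
    alphaE q p < q := by
  obtain ⟨hmul, ha0, ha2⟩ := alpha_mul hq0 hq hp1 hp2.le
  nlinarith [hmul]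

lemma PP_pos {q a : ℝ} (hq : q < 1/2) (ha0 : 0 < a) (haq : a < q) : 0 < PPe q a := by
  have key : PPe q a = (q-a)^4 + (1-2*q)/2*((1-2*a)^2*(2*q-a^2) - a^2*(1-2*q)^2) := by
    unfold PPe; ring
  have h3 : a^2 < q := by nlinarith
  have h4 : (1-2*q)^2 ≤ (1-2*a)^2 := by nlinarith
  have e1 : a^2*(1-2*q)^2 ≤ a^2*(1-2*a)^2 := mul_le_mul_of_nonneg_left h4 (sq_nonneg a)
  have e2 : a^2*(1-2*a)^2 < (2*q-a^2)*(1-2*a)^2 := by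
    apply mul_lt_mul_of_pos_right (by linarith) (by apply pow_pos; linarith)
  have hinner : 0 < (1-2*a)^2*(2*q-a^2) - a^2*(1-2*q)^2 := by nlinarith [e1, e2]
  have h5 : 0 < (1-2*q)/2 := by linarith
  have h6 : 0 ≤ (q-a)^4 := by positivity
  rw [key]
  nlinarith [mul_pos h5 hinner]

lemma Dpos {q a : ℝ} (hq : q < 1/2) (ha0 : 0 < a) (haq : a < q) :
    0 < (1 - 2*a) * (q - a) * (1 - a - q) := by
  apply mul_pos (mul_pos _ _) <;> linarith

lemma Phi_hasDeriv {q : ℝ} (hq : q < 1/2) {a : ℝ} (ha0 : 0 < a) (haq : a < q) :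
    HasDerivAt (PhiE q) (PPe q a / ((1 - 2*a) * (q - a) * (1 - a - q))^2) a := by
  have hx := hasDerivAt_id a
  have h1 : HasDerivAt (fun x : ℝ => 1 - x) (-1) a := by
    simpa using (hasDerivAt_id a).const_sub 1
  have h2 := h1.pow 2
  have h3 : HasDerivAt (fun x : ℝ => 2 * x * q) (2 * q) a := by
    simpa using ((hasDerivAt_id a).const_mul 2).mul_const q
  have hA : HasDerivAt (fun x : ℝ => (1 - x)^2 + 2*x*q - q - q^2)
      ((2:ℕ) * (1 - a)^(2-1) * (-1) + 2*q) a := ((h2.add h3).sub_const q).sub_const (q^2)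
  have hN := hx.mul hA
  have h4 : HasDerivAt (fun x : ℝ => 1 - 2*x) (-2) a := by
    simpa using ((hasDerivAt_id a).const_mul 2).const_sub 1
  have h5 : HasDerivAt (fun x : ℝ => q - x) (-1) a := (hasDerivAt_id a).const_sub q
  have h6 : HasDerivAt (fun x : ℝ => 1 - x - q) (-1) a := h1.sub_const q
  have hD := (h4.mul h5).mul h6
  have hDne : (1 - 2*a) * (q - a) * (1 - a - q) ≠ 0 := (Dpos hq ha0 haq).ne'
  have h := hN.div hD hDne
  simp only [id_eq] at h
  refine h.congr_deriv ?_
  unfold PPe; simp only [Pi.mul_apply, id]; push_cast; ring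

lemma Phi_strictMono {q : ℝ} (hq : q < 1/2) : StrictMonoOn (PhiE q) (Set.Ioo 0 q) := by
  apply strictMonoOn_of_deriv_pos (convex_Ioo 0 q)
  · exact fun x hx => ((Phi_hasDeriv hq hx.1 hx.2).continuousAt).continuousWithinAt
  · intro x hx
    rw [interior_Ioo] at hx
    rw [(Phi_hasDeriv hq hx.1 hx.2).deriv]
    exact div_pos (PP_pos hq hx.1 hx.2) (pow_pos (Dpos hq hx.1 hx.2) 2)

lemma FF_pos {q : ℝ} (hq0 : 0 < q) (n : ℕ) {a : ℝ} (ha0 : 0 < a) (haq : a < q)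
    (hq : q < 1/2) : 0 < FFe q n a := by
  unfold FFe
  apply mul_pos
  · exact div_pos (mul_pos ha0 (by linarith)) (mul_pos hq0 (by linarith))
  · exact pow_pos (div_pos (by positivity) (mul_pos ha0 (by linarith))) _

lemma FF_hasDeriv {q : ℝ} (hq0 : 0 < q) (hq : q < 1/2) (n : ℕ) {a : ℝ} (ha0 : 0 < a)
    (haq : a < q) :
    HasDerivAt (FFe q n)
      ((q^2 / (a*(1-a)))^n *
        (q * (a * ((1 - a)^2 + 2*a*q - q - q^2) - n * ((1 - 2*a) * (q - a) * (1 - a - q)))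
          / ((q - a)^2 * a * (1 - a)^2))) a := by
  have ha1 : a < 1/2 := by linarith
  have hqa : q - a ≠ 0 := by intro h; linarith [sub_eq_zero.mp h]
  have hane : a ≠ 0 := ha0.ne'
  have h1a : (1:ℝ) - a ≠ 0 := by intro h; nlinarith [sub_eq_zero.mp h]
  have hu : HasDerivAt (fun x : ℝ => x * (1 - x - q)) (1 * (1 - a - q) + a * (-1)) a :=
    (hasDerivAt_id a).mul (((hasDerivAt_id a).const_sub 1).sub_const q)
  have hv : HasDerivAt (fun x : ℝ => q * (q - x)) (q * (-1)) a :=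
    ((hasDerivAt_id a).const_sub q).const_mul q
  have hvne : q * (q - a) ≠ 0 := by positivity
  have hF1 := hu.div hv hvne
  have hw : HasDerivAt (fun x : ℝ => x * (1 - x)) (1 * (1 - a) + a * (-1)) a :=
    (hasDerivAt_id a).mul ((hasDerivAt_id a).const_sub 1)
  have hwne : a * (1 - a) ≠ 0 := mul_ne_zero hane h1a
  have hF2 := (hasDerivAt_const a (q^2)).div hw hwne
  have hP := hF2.pow (n+1)
  have hF := hF1.mul hP
  have hbr : ((1 * (1 - a - q) + a * (-1)) * (q * (q - a)) - a * (1 - a - q) * (q * (-1)))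
        / (q * (q - a))^2 * (q^2 / (a*(1-a)))
      + a * (1 - a - q) / (q * (q - a)) *
        (((n:ℝ)+1) * ((0 * (a * (1 - a)) - q^2 * (1 * (1 - a) + a * (-1))) / (a * (1-a))^2))
      = q * (a * ((1 - a)^2 + 2*a*q - q - q^2) - n * ((1 - 2*a) * (q - a) * (1 - a - q)))
          / ((q - a)^2 * a * (1 - a)^2) := by
    field_simp
    ring
  refine hF.congr_deriv ?_
  simp only [Nat.add_sub_cancel, Pi.mul_apply, Pi.div_apply, Pi.pow_apply]
  push_cast
  linear_combination ((q^2 / (a*(1-a)))^n) * hbr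

lemma FF_anti {q : ℝ} (hq0 : 0 < q) (hq : q < 1/2) (n : ℕ) {lo hi : ℝ} (hlo : 0 < lo)
    (hhi : hi ≤ q) (h : ∀ a ∈ Set.Ioo lo hi, PhiE q a < n) :
    StrictAntiOn (FFe q n) (Set.Ioo lo hi) := by
  apply strictAntiOn_of_deriv_neg (convex_Ioo lo hi)
  · intro x hx
    exact ((FF_hasDeriv hq0 hq n (lt_trans hlo hx.1) (lt_of_lt_of_le hx.2 hhi)).continuousAt).continuousWithinAt
  · intro x hx
    rw [interior_Ioo] at hx
    have hx0 : 0 < x := lt_trans hlo hx.1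
    have hxq : x < q := lt_of_lt_of_le hx.2 hhi
    rw [(FF_hasDeriv hq0 hq n hx0 hxq).deriv]
    have hD := Dpos hq hx0 hxq
    have hΦ := h x hx
    unfold PhiE at hΦ
    have hnum : x * ((1 - x)^2 + 2*x*q - q - q^2)
        - n * ((1 - 2*x) * (q - x) * (1 - x - q)) < 0 := by
      have := (div_lt_iff₀ hD).mp hΦ; linarith
    apply mul_neg_of_pos_of_neg
    · exact pow_pos (div_pos (by positivity) (mul_pos hx0 (by linarith))) n
    · apply div_neg_of_neg_of_pos (mul_neg_of_pos_of_neg hq0 hnum)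
      exact mul_pos (mul_pos (pow_pos (by linarith) 2) hx0) (pow_pos (by linarith) 2)

lemma FF_mono {q : ℝ} (hq0 : 0 < q) (hq : q < 1/2) (n : ℕ) {lo hi : ℝ} (hlo : 0 < lo)
    (hhi : hi ≤ q) (h : ∀ a ∈ Set.Ioo lo hi, (n:ℝ) < PhiE q a) :
    StrictMonoOn (FFe q n) (Set.Ioo lo hi) := by
  apply strictMonoOn_of_deriv_pos (convex_Ioo lo hi)
  · intro x hx
    exact ((FF_hasDeriv hq0 hq n (lt_trans hlo hx.1) (lt_of_lt_of_le hx.2 hhi)).continuousAt).continuousWithinAt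
  · intro x hx
    rw [interior_Ioo] at hx
    have hx0 : 0 < x := lt_trans hlo hx.1
    have hxq : x < q := lt_of_lt_of_le hx.2 hhi
    rw [(FF_hasDeriv hq0 hq n hx0 hxq).deriv]
    have hD := Dpos hq hx0 hxq
    have hΦ := h x hx
    unfold PhiE at hΦ
    have hnum : 0 < x * ((1 - x)^2 + 2*x*q - q - q^2)
        - n * ((1 - 2*x) * (q - x) * (1 - x - q)) := by
      have := (lt_div_iff₀ hD).mp hΦ; linarith
    apply mul_pos
    · exact pow_pos (div_pos (by positivity) (mul_pos hx0 (by linarith))) n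
    · apply div_pos (mul_pos hq0 hnum)
      exact mul_pos (mul_pos (pow_pos (by linarith) 2) hx0) (pow_pos (by linarith) 2)

lemma Vp_eq {π0 q : ℝ} (hq0 : 0 < q) (hq : q < 1/2) (n : ℕ) {p : ℝ}
    (hp1 : q < p) (hp2 : p < 1 - q) :
    Vp π0 q n p = 1 / (1 + (1 - π0) / π0 * FFe q n (alphaE q p)) := by
  obtain ⟨hmul, ha0, ha2⟩ := alpha_mul hq0 hq hp1.le hp2.le
  have haq : alphaE q p < q := alpha_lt hq0 hq hp1.le hp2
  have hp0 : 0 < p := lt_trans hq0 hp1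
  have hprod : 0 < alphaE q p * (1 - alphaE q p) := mul_pos ha0 (by linarith)
  show 1 / (1 + (1 - π0) / π0 * ((p - alphaE q p) / (q - alphaE q p)) * (q / p) ^ (n + 1)) = _
  have e1 : (p - alphaE q p) / (q - alphaE q p)
      = alphaE q p * (1 - alphaE q p - q) / (q * (q - alphaE q p)) := by
    rw [div_eq_div_iff (sub_pos.mpr haq).ne' (mul_pos hq0 (sub_pos.mpr haq)).ne']
    linear_combination (alphaE q p - q) * hmul
  have e2 : q / p = q^2 / (alphaE q p * (1 - alphaE q p)) := by
    rw [div_eq_div_iff hp0.ne' hprod.ne']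
    linear_combination q * hmul
  rw [e1, e2]
  unfold FFe
  ring_nf


/-- Proposition 7(3): for fixed `π0 ∈ (0,1)` and `q ∈ (0, 1/2)`, for each `n`
there is a threshold `p̂(n) ∈ [q, 1−q)` such that `V_n` is increasing in `p`
on `(q, p̂(n))` and decreasing on `(p̂(n), 1−q)`; the thresholds can be chosen
non-decreasing in `n`. -/
theorem stmt_19 (π0 q : ℝ) (h0 : 0 < π0) (h1 : π0 < 1) (hq0 : 0 < q) (hq : q < 1 / 2) :
    ∃ phat : ℕ → ℝ,
      (∀ n : ℕ, phat n ∈ Set.Ico q (1 - q) ∧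
        StrictMonoOn (Vp π0 q n) (Set.Ioo q (phat n)) ∧
        StrictAntiOn (Vp π0 q n) (Set.Ioo (phat n) (1 - q))) ∧
      Monotone phat := by

  obtain ⟨haqmul, haq0, haqhalf⟩ := alpha_mul hq0 hq (le_refl q) (by linarith)
  set aq := alphaE q q with haqdef
  have haqlt : aq < q := alpha_lt hq0 hq (le_refl q) (by linarith)
  set cc := (1-q)*(1-2*q) with hccdef
  have hccpos : 0 < cc := mul_pos (by linarith) (by linarith)
  set S : ℕ → Set ℝ := fun n => insert aq {a : ℝ | a ∈ Set.Ioo (0:ℝ) q ∧ PhiE q a ≤ n}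
    with hSdef
  have hSne : ∀ n, (S n).Nonempty := fun n => ⟨aq, Set.mem_insert _ _⟩
  have hbnd : ∀ n : ℕ, ∀ a ∈ S n, a ≤ max aq (max (q/2) (q - q*cc/(2*(n+1)))) := by
    intro n a ha
    rcases Set.mem_insert_iff.mp ha with rfl | hmem
    · exact le_max_left _ _
    · obtain ⟨⟨ha0, haq⟩, hΦ⟩ := hmem
      by_contra hcon
      push_neg at hcon
      have hA1 : q/2 < a := lt_of_le_of_lt (le_trans (le_max_left _ _) (le_max_right _ _)) hcon
      have hA2 : q - q*cc/(2*(n+1)) < a :=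
        lt_of_le_of_lt (le_trans (le_max_right _ _) (le_max_right _ _)) hcon
      have hD := Dpos hq ha0 haq
      unfold PhiE at hΦ
      have hK : a * ((1 - a)^2 + 2*a*q - q - q^2)
          ≤ n * ((1 - 2*a) * (q - a) * (1 - a - q)) := (div_le_iff₀ hD).mp hΦ
      have hKlb : cc ≤ (1 - a)^2 + 2*a*q - q - q^2 := by
        nlinarith [mul_nonneg (sub_nonneg.mpr haq.le) (show (0:ℝ) ≤ 2 - a - 3*q by linarith)]
      have hDub : (1 - 2*a) * (q - a) * (1 - a - q) ≤ q - a := by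
        nlinarith [mul_nonneg (sub_nonneg.mpr haq.le)
          (show (0:ℝ) ≤ 3*a + q - 2*a^2 - 2*a*q by nlinarith), sub_nonneg.mpr haq.le]
      have c1 : (n:ℝ) * ((1 - 2*a) * (q - a) * (1 - a - q)) ≤ n * (q - a) :=
        mul_le_mul_of_nonneg_left hDub (Nat.cast_nonneg n)
      have c2 : (n:ℝ) * (q - a) ≤ n * (q*cc/(2*(n+1))) :=
        mul_le_mul_of_nonneg_left (by linarith) (Nat.cast_nonneg n)
      have c3 : (n:ℝ) * (q*cc/(2*(n+1))) ≤ q*cc/2 := by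
        have e : (n:ℝ) * (q*cc/(2*(n+1))) = (q*cc/2) * ((n:ℝ)/((n:ℝ)+1)) := by
          field_simp
        have hle : (n:ℝ)/((n:ℝ)+1) ≤ 1 := by
          rw [div_le_one (by positivity)]; linarith
        calc (n:ℝ) * (q*cc/(2*(n+1))) = (q*cc/2) * ((n:ℝ)/((n:ℝ)+1)) := e
          _ ≤ (q*cc/2) * 1 := by
              apply mul_le_mul_of_nonneg_left hle (by positivity)
          _ = q*cc/2 := by ring
      have d1 : (q/2)*cc < a*cc := mul_lt_mul_of_pos_right hA1 hccpos
      have d2 : a*cc ≤ a*((1 - a)^2 + 2*a*q - q - q^2) :=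
        mul_le_mul_of_nonneg_left hKlb ha0.le
      linarith
  have hbddS : ∀ n, BddAbove (S n) := fun n => ⟨_, hbnd n⟩
  set ahat : ℕ → ℝ := fun n => sSup (S n) with hahatdef
  have hlb : ∀ n, aq ≤ ahat n := fun n => le_csSup (hbddS n) (Set.mem_insert _ _)
  have hub : ∀ n, ahat n < q := by
    intro n
    have h := csSup_le (hSne n) (hbnd n)
    have hδ : 0 < q*cc/(2*((n:ℝ)+1)) := by positivity
    have hmax : max aq (max (q/2) (q - q*cc/(2*((n:ℝ)+1)))) < q :=
      max_lt haqlt (max_lt (by linarith) (by linarith))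
    calc ahat n ≤ _ := h
      _ < q := by push_cast at hmax ⊢; exact hmax
  have hmono : Monotone ahat := by
    intro n m hnm
    apply csSup_le_csSup (hbddS m) (hSne n)
    intro a ha
    rcases Set.mem_insert_iff.mp ha with rfl | ⟨h1, h2⟩
    · exact Set.mem_insert _ _
    · exact Set.mem_insert_of_mem _ ⟨h1, le_trans h2 (by exact_mod_cast Nat.cast_le.mpr hnm)⟩
  have hleft : ∀ n : ℕ, ∀ x ∈ Set.Ioo aq (ahat n), PhiE q x < n := by
    intro n x hx
    obtain ⟨a', ha'S, hxa'⟩ := exists_lt_of_lt_csSup (hSne n) hx.2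
    rcases Set.mem_insert_iff.mp ha'S with rfl | ⟨hm1, hm2⟩
    · linarith [hx.1]
    · have hx0 : 0 < x := lt_trans haq0 hx.1
      have hxq : x < q := lt_trans hxa' hm1.2
      exact lt_of_lt_of_le (Phi_strictMono hq ⟨hx0, hxq⟩ hm1 hxa') hm2
  have hright : ∀ n : ℕ, ∀ x ∈ Set.Ioo (ahat n) q, (n:ℝ) < PhiE q x := by
    intro n x hx
    by_contra hcon
    push_neg at hcon
    have hx0 : 0 < x := lt_of_le_of_lt (le_trans haq0.le (hlb n)) hx.1
    have hmem : x ∈ S n := Set.mem_insert_of_mem _ ⟨⟨hx0, hx.2⟩, hcon⟩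
    linarith [le_csSup (hbddS n) hmem, hx.1]
  have hphat_ge : ∀ n, q ≤ ahat n * (1 - ahat n)/q := by
    intro n
    rw [le_div_iff₀ hq0]
    nlinarith [mul_nonneg (sub_nonneg.mpr (hlb n))
      (show (0:ℝ) ≤ 1 - ahat n - aq by linarith [hub n])]
  have hphat_lt : ∀ n, ahat n * (1 - ahat n)/q < 1 - q := by
    intro n
    rw [div_lt_iff₀ hq0]
    nlinarith [mul_pos (sub_pos.mpr (hub n)) (show (0:ℝ) < 1 - ahat n - q by linarith [hub n, hlb n])]
  have hainv : ∀ n, alphaE q (ahat n * (1 - ahat n)/q) = ahat n := fun n =>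
    alpha_inv hq0 (by linarith [hlb n]) (by linarith [hub n])
  have hC : 0 < (1 - π0)/π0 := div_pos (by linarith) h0
  refine ⟨fun n => ahat n * (1 - ahat n)/q, fun n => ⟨⟨hphat_ge n, hphat_lt n⟩, ?_, ?_⟩, ?_⟩
  · -- StrictMonoOn
    intro p₁ hp₁ p₂ hp₂ h12
    have hp₁m : p₁ ∈ Set.Ioo q (1-q) := ⟨hp₁.1, lt_trans hp₁.2 (hphat_lt n)⟩
    have hp₂m : p₂ ∈ Set.Ioo q (1-q) := ⟨hp₂.1, lt_trans hp₂.2 (hphat_lt n)⟩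
    have key := FF_anti hq0 hq n haq0 (hub n).le (hleft n)
    have ha₁ : alphaE q p₁ ∈ Set.Ioo aq (ahat n) :=
      ⟨alpha_strictMono hq0 hq (le_refl q) hp₁.1 hp₁m.2.le,
       (hainv n) ▸ alpha_strictMono hq0 hq hp₁m.1.le hp₁.2 (hphat_lt n).le⟩
    have ha₂ : alphaE q p₂ ∈ Set.Ioo aq (ahat n) :=
      ⟨alpha_strictMono hq0 hq (le_refl q) hp₂.1 hp₂m.2.le,
       (hainv n) ▸ alpha_strictMono hq0 hq hp₂m.1.le hp₂.2 (hphat_lt n).le⟩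
    have hFF : FFe q n (alphaE q p₂) < FFe q n (alphaE q p₁) :=
      key ha₁ ha₂ (alpha_strictMono hq0 hq hp₁m.1.le h12 hp₂m.2.le)
    rw [Vp_eq hq0 hq n hp₁m.1 hp₁m.2, Vp_eq hq0 hq n hp₂m.1 hp₂m.2]
    have hF₂ : 0 < FFe q n (alphaE q p₂) :=
      FF_pos hq0 n (lt_trans haq0 ha₂.1) (lt_trans ha₂.2 (hub n)) hq
    apply one_div_lt_one_div_of_lt
    · linarith [mul_pos hC hF₂]
    · linarith [mul_lt_mul_of_pos_left hFF hC]
  · -- StrictAntiOn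
    intro p₁ hp₁ p₂ hp₂ h12
    have hp₁m : p₁ ∈ Set.Ioo q (1-q) := ⟨lt_of_le_of_lt (hphat_ge n) hp₁.1, hp₁.2⟩
    have hp₂m : p₂ ∈ Set.Ioo q (1-q) := ⟨lt_of_le_of_lt (hphat_ge n) hp₂.1, hp₂.2⟩
    have hahat0 : 0 < ahat n := lt_of_lt_of_le haq0 (hlb n)
    have key := FF_mono hq0 hq n hahat0 (le_refl q) (hright n)
    have ha₁ : alphaE q p₁ ∈ Set.Ioo (ahat n) q :=
      ⟨(hainv n) ▸ alpha_strictMono hq0 hq (hphat_ge n) hp₁.1 hp₁m.2.le,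
       alpha_lt hq0 hq hp₁m.1.le hp₁m.2⟩
    have ha₂ : alphaE q p₂ ∈ Set.Ioo (ahat n) q :=
      ⟨(hainv n) ▸ alpha_strictMono hq0 hq (hphat_ge n) hp₂.1 hp₂m.2.le,
       alpha_lt hq0 hq hp₂m.1.le hp₂m.2⟩
    have hFF : FFe q n (alphaE q p₁) < FFe q n (alphaE q p₂) :=
      key ha₁ ha₂ (alpha_strictMono hq0 hq hp₁m.1.le h12 hp₂m.2.le)
    rw [Vp_eq hq0 hq n hp₁m.1 hp₁m.2, Vp_eq hq0 hq n hp₂m.1 hp₂m.2]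
    have hF₁ : 0 < FFe q n (alphaE q p₁) :=
      FF_pos hq0 n (lt_trans hahat0 ha₁.1) ha₁.2 hq
    apply one_div_lt_one_div_of_lt
    · linarith [mul_pos hC hF₁]
    · linarith [mul_lt_mul_of_pos_left hFF hC]
  · -- Monotone phat
    intro n m hnm
    have h := hmono hnm
    apply (div_le_div_iff_of_pos_right hq0).mpr
    nlinarith [mul_nonneg (sub_nonneg.mpr h)
      (show (0:ℝ) ≤ 1 - ahat m - ahat n by linarith [hub m, hub n, hlb n, haq0])]
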